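/- Fix μ > 0, v₊ > 1, u₋ > u₊, set s = (u₋ − u₊)/(v₊ − 1), and let v̄, ū be the limit traveling-wave profiles. Then the viscous flux is continuous across the interface: lim_{x→0⁺} (−μ ū'(x)/v̄(x)) = s²(v₊ − 1), i.e. the pressure value p₋ = s²(v₊ − 1) in the congested zone x < 0 matches the limit of −μ ū'/v̄ from the free zone. -/

import Mathlib

open Set Filter

/-- Continuity of the viscous flux across the interface: the limit from the free zone of
`−μ ū'/v̄` as `x → 0⁺` equals the congested pressure value `s²(v₊ − 1)`. -/
theorem stmt4 (μ vp um up : ℝ) (hμ : 0 < μ) (hvp : 1 < vp) (hu : up < um)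
    (s : ℝ) (hs : s = (um - up) / (vp - 1))
    (vbar : ℝ → ℝ)
    (hvbar : ∀ x : ℝ,
      vbar x = if x ≤ 0 then 1 else vp / (1 + (vp - 1) * Real.exp (-s * vp * x / μ)))
    (ubar : ℝ → ℝ)
    (hubar : ∀ x : ℝ, ubar x = up + s * vp - s * vbar x) :
    Tendsto (fun x => -μ * deriv ubar x / vbar x) (nhdsWithin 0 (Ioi 0))
      (nhds (s ^ 2 * (vp - 1))) := by
  have hμ' : μ ≠ 0 := ne_of_gt hμ
  set g : ℝ → ℝ := fun x =>
    s ^ 2 * vp * (vp - 1) * Real.exp (-s * vp * x / μ) /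
      (1 + (vp - 1) * Real.exp (-s * vp * x / μ)) with hg
  have hD : ∀ x : ℝ, 0 < 1 + (vp - 1) * Real.exp (-s * vp * x / μ) := by
    intro x
    have := Real.exp_pos (-s * vp * x / μ)
    nlinarith
  -- the function agrees with g on Ioi 0
  have hEq : ∀ x ∈ Ioi (0:ℝ), -μ * deriv ubar x / vbar x = g x := by
    intro x hx
    have hx' : (0:ℝ) < x := hx
    -- derivative computations at x
    have h1 : HasDerivAt (fun y : ℝ => -s * vp * y / μ) (-s * vp / μ) x := by
      simpa using ((hasDerivAt_id x).const_mul (-s * vp)).div_const μ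
    have h2 := h1.exp
    have h3 := (h2.const_mul (vp - 1)).const_add 1
    have hDx := hD x
    have h4 := h3.inv (ne_of_gt hDx)
    have h5 := h4.const_mul vp
    have h6 := (h5.const_mul (-s)).const_add (up + s * vp)
    -- h6 : HasDerivAt (fun y => up + s*vp + -s * (vp * (1 + (vp-1)*exp(...))⁻¹)) ... x
    have hubar' : HasDerivAt ubar
        (-s * (vp * (-((vp - 1) * (Real.exp (-s * vp * x / μ) * (-s * vp / μ))) /
          (1 + (vp - 1) * Real.exp (-s * vp * x / μ)) ^ 2))) x := by
      apply h6.congr_of_eventuallyEq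
      filter_upwards [Ioi_mem_nhds hx'] with y hy
      rw [hubar y, hvbar y, if_neg (not_le.mpr hy)]
      simp only [Pi.inv_apply]
      ring
    rw [hubar'.deriv, hvbar x, if_neg (not_le.mpr hx'), hg]
    have hvp' : vp ≠ 0 := by positivity
    have hEpos : (0:ℝ) < Real.exp (-s * vp * x / μ) := Real.exp_pos _
    beta_reduce
    generalize hEdef : Real.exp (-s * vp * x / μ) = E at hEpos ⊢
    have hDx : (0:ℝ) < 1 + (vp - 1) * E := by nlinarith
    have hDne : (1 + (vp - 1) * E) ≠ 0 := ne_of_gt hDx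
    field_simp
  have hcont : Tendsto g (nhdsWithin 0 (Ioi 0)) (nhds (s ^ 2 * (vp - 1))) := by
    have hc : ContinuousAt g 0 := by
      apply ContinuousAt.div
      · fun_prop
      · fun_prop
      · simpa using ne_of_gt (hD 0)
    have h0 : g 0 = s ^ 2 * (vp - 1) := by
      have hvp' : vp ≠ 0 := by positivity
      simp only [hg, mul_zero, zero_div, Real.exp_zero, mul_one]
      field_simp
      linear_combination (s ^ 2 * vp - s ^ 2) * mul_inv_cancel₀ hvp'
    have := hc.continuousWithinAt (s := Ioi (0:ℝ))
    rw [ContinuousWithinAt, h0] at this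
    exact this
  exact hcont.congr' (by filter_upwards [self_mem_nhdsWithin] with x hx using (hEq x hx).symm)
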